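/- The function P(x,t) = Σ_{k=0}^{min(x,ξ)} [λ(t)^{x-k} e^{-λ(t)}/(x-k)!] · [C(ξ,k) w(t)^k (1-w(t))^{ξ-k}], with w(t) = e^{-γ(t-t₀)} and λ(t) = (k₀/γ)(1 - e^{-γ(t-t₀)}) for constants k₀, γ > 0, satisfies the birth-death chemical master equation ∂P(x,t)/∂t = k₀[P(x-1,t) - P(x,t)] + γ[(x+1)P(x+1,t) - xP(x,t)] for all x ∈ ℕ (with the convention P(-1,t) = 0). -/

import Mathlib

open Real Finset

noncomputable def Afun (l : ℝ) (m : ℤ) : ℝ :=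
  if m < 0 then 0 else l ^ m.toNat * Real.exp (-l) / (m.toNat.factorial)

noncomputable def Bfun (ξ : ℕ) (v : ℝ) (k : ℕ) : ℝ :=
  (ξ.choose k : ℝ) * v ^ k * (1 - v) ^ (ξ - k)

lemma Afun_neg {l : ℝ} {m : ℤ} (h : m < 0) : Afun l m = 0 := if_pos h

lemma Afun_recur (l : ℝ) (m : ℤ) : ((m : ℝ) + 1) * Afun l (m + 1) = l * Afun l m := by
  rcases lt_or_ge m 0 with hm | hm
  · rcases lt_or_ge (m + 1) 0 with hm1 | hm1
    · rw [Afun_neg hm, Afun_neg hm1]; ring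
    · have : m = -1 := by omega
      subst this
      simp [Afun_neg hm]
  · have h1 : ¬ (m + 1 < 0) := by omega
    have h2 : ¬ (m < 0) := by omega
    have h3 : (m + 1).toNat = m.toNat + 1 := by omega
    rw [Afun, Afun, if_neg h1, if_neg h2, h3]
    have hm' : ((m : ℝ)) = (m.toNat : ℝ) := by
      exact_mod_cast (Int.toNat_of_nonneg hm).symm
    rw [hm', Nat.factorial_succ, pow_succ]
    have : (m.toNat.factorial : ℝ) ≠ 0 := Nat.cast_ne_zero.mpr (Nat.factorial_ne_zero _)
    field_simp
    push_cast
    ring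

lemma hasDerivAt_Afun (l : ℝ) (m : ℤ) :
    HasDerivAt (fun l => Afun l m) (Afun l (m - 1) - Afun l m) l := by
  rcases lt_or_ge m 0 with hm | hm
  · have h0 : (fun l => Afun l m) = fun _ => (0 : ℝ) := funext fun _ => if_pos hm
    rw [h0, Afun_neg (by omega : m - 1 < 0), Afun_neg hm, sub_zero]
    exact hasDerivAt_const l 0
  · have h2 : ¬ (m < 0) := by omega
    set n := m.toNat with hn
    have h0 : (fun l => Afun l m) = fun l => l ^ n * Real.exp (-l) / n.factorial :=
      funext fun _ => if_neg h2
    rw [h0]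
    have hder : HasDerivAt (fun l : ℝ => l ^ n * Real.exp (-l) / n.factorial)
        (((n : ℝ) * l ^ (n - 1) * Real.exp (-l) + l ^ n * (Real.exp (-l) * (-1))) / n.factorial) l := by
      exact ((hasDerivAt_pow n l).mul ((hasDerivAt_id l).neg.exp)).div_const _
    convert hder using 1
    rcases Nat.eq_zero_or_pos n with h | h
    · have hm0 : m = 0 := by omega
      subst hm0
      rw [Afun_neg (by norm_num : (0 : ℤ) - 1 < 0), Afun]
      simp [h]
    · have h1 : ¬ (m - 1 < 0) := by omega
      have h3 : (m - 1).toNat = n - 1 := by omega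
      rw [Afun, Afun, if_neg h1, if_neg h2, h3, ← hn]
      have hfac : n.factorial = n * (n - 1).factorial := (Nat.mul_factorial_pred h.ne').symm
      rw [hfac]
      have e1 : ((n - 1).factorial : ℝ) ≠ 0 := Nat.cast_ne_zero.mpr (Nat.factorial_ne_zero _)
      have e2 : (n : ℝ) ≠ 0 := Nat.cast_ne_zero.mpr (by omega)
      push_cast
      field_simp
      ring


lemma hasDerivAt_Bfun (ξ : ℕ) (γ t₀ t : ℝ) (k : ℕ) (hk : k ≤ ξ) :
    HasDerivAt (fun t => Bfun ξ (Real.exp (-γ * (t - t₀))) k)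
      (γ * (((k : ℝ) + 1) * Bfun ξ (Real.exp (-γ * (t - t₀))) (k + 1)
        - (k : ℝ) * Bfun ξ (Real.exp (-γ * (t - t₀))) k)) t := by
  have hw' : HasDerivAt (fun t => Real.exp (-γ * (t - t₀)))
      (Real.exp (-γ * (t - t₀)) * (-γ)) t := by
    simpa using (((hasDerivAt_id t).sub_const t₀).const_mul (-γ)).exp
  set v := Real.exp (-γ * (t - t₀)) with hv
  have hB : HasDerivAt (fun v : ℝ => (ξ.choose k : ℝ) * v ^ k * (1 - v) ^ (ξ - k))
      (((ξ.choose k : ℝ) * ((k : ℝ) * v ^ (k - 1))) * (1 - v) ^ (ξ - k)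
        + ((ξ.choose k : ℝ) * v ^ k) * (((ξ - k : ℕ) : ℝ) * (1 - v) ^ (ξ - k - 1) * (-1))) v :=
    ((hasDerivAt_pow k v).const_mul _).mul (((hasDerivAt_id v).const_sub 1).pow (ξ - k))
  have hcomp := hB.comp t hw'
  have hfun : ((fun v : ℝ => (ξ.choose k : ℝ) * v ^ k * (1 - v) ^ (ξ - k)) ∘
      (fun t => Real.exp (-γ * (t - t₀)))) = fun t => Bfun ξ (Real.exp (-γ * (t - t₀))) k := by
    funext s; simp [Bfun, Function.comp]
  rw [hfun] at hcomp
  refine hcomp.congr_deriv ?_; symm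
  have hchn := Nat.choose_succ_right_eq ξ k
  have hch : ((k : ℝ) + 1) * (ξ.choose (k + 1) : ℝ) = ((ξ - k : ℕ) : ℝ) * (ξ.choose k : ℝ) := by
    have h := congrArg (Nat.cast : ℕ → ℝ) hchn
    push_cast at h
    linear_combination h
  rw [Bfun, Bfun]
  have hsub : ξ - (k + 1) = ξ - k - 1 := by omega
  rw [hsub]
  rcases Nat.eq_zero_or_pos k with rfl | hk0
  · rw [Nat.sub_zero] at hch
    simp only [Nat.choose_zero_right, Nat.cast_one, mul_one, Nat.cast_zero, zero_add] at hch
    simp only [Nat.sub_zero, pow_zero, Nat.cast_zero, zero_mul, pow_one, Nat.choose_zero_right,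
      Nat.cast_one, zero_add, mul_one, one_mul, sub_zero]
    linear_combination (γ * v * (1 - v) ^ (ξ - 1)) * hch
  · rcases eq_or_lt_of_le hk with rfl | hkξ
    · have h2 : (k.choose (k + 1) : ℝ) = 0 := by
        rw [Nat.choose_eq_zero_of_lt (by omega)]; norm_num
      have hv1 : v ^ k = v ^ (k - 1) * v := by
        conv_lhs => rw [show k = (k - 1) + 1 by omega, pow_succ]
      rw [h2, Nat.sub_self, hv1]
      simp only [Nat.cast_zero, pow_zero]
      ring
    · have hv1 : v ^ k = v ^ (k - 1) * v := by
        conv_lhs => rw [show k = (k - 1) + 1 by omega, pow_succ]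
      have hv3 : v ^ (k + 1) = v ^ (k - 1) * v * v := by rw [pow_succ, hv1]
      have hv2 : (1 - v) ^ (ξ - k) = (1 - v) ^ (ξ - k - 1) * (1 - v) := by
        conv_lhs => rw [show ξ - k = (ξ - k - 1) + 1 by omega, pow_succ]
      rw [hv1, hv2, hv3]
      linear_combination (γ * (v ^ (k - 1) * v * v) * (1 - v) ^ (ξ - k - 1)) * hch

theorem birth_death_transition_probability_solves_CME
    (k₀ γ t₀ : ℝ) (hk : 0 < k₀) (hγ : 0 < γ) (ξ : ℕ)
    (w lam : ℝ → ℝ) (P : ℕ → ℝ → ℝ)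
    (hw : w = fun t => Real.exp (-γ * (t - t₀)))
    (hlam : lam = fun t => (k₀ / γ) * (1 - Real.exp (-γ * (t - t₀))))
    (hP : P = fun x t => ∑ k ∈ Finset.range (min x ξ + 1),
        (lam t ^ (x - k) * Real.exp (-(lam t)) / (x - k).factorial)
          * ((ξ.choose k : ℝ) * w t ^ k * (1 - w t) ^ (ξ - k))) :
    ∀ (x : ℕ) (t : ℝ),
      deriv (fun t' => P x t') t
        = k₀ * ((if x = 0 then 0 else P (x - 1) t) - P x t)
          + γ * ((x + 1 : ℝ) * P (x + 1) t - (x : ℝ) * P x t) := by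
  intro x t
  have P_eq : ∀ (y : ℕ) (s : ℝ), P y s
      = ∑ k ∈ Finset.range (ξ + 1), Afun (lam s) ((y : ℤ) - k) * Bfun ξ (w s) k := by
    intro y s
    simp only [hP]
    have h1 : ∑ k ∈ Finset.range (min y ξ + 1),
        (lam s ^ (y - k) * Real.exp (-(lam s)) / (y - k).factorial)
          * ((ξ.choose k : ℝ) * w s ^ k * (1 - w s) ^ (ξ - k))
        = ∑ k ∈ Finset.range (min y ξ + 1), Afun (lam s) ((y : ℤ) - k) * Bfun ξ (w s) k := by
      refine Finset.sum_congr rfl fun k hk => ?_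
      simp only [Finset.mem_range] at hk
      have htn : ((y : ℤ) - (k : ℤ)).toNat = y - k := by omega
      rw [Afun, if_neg (by omega), htn, Bfun]
    rw [h1]
    refine Finset.sum_subset (Finset.range_subset_range.mpr (by omega)) fun b hb hnb => ?_
    simp only [Finset.mem_range] at hb hnb
    rw [Afun_neg (by omega), zero_mul]
  have hwd : HasDerivAt w (w t * (-γ)) t := by
    rw [hw]
    simpa using (((hasDerivAt_id t).sub_const t₀).const_mul (-γ)).exp
  have hlam' : HasDerivAt lam (k₀ * w t) t := by
    rw [hlam]
    have h := ((hasDerivAt_const t (1 : ℝ)).sub hwd).const_mul (k₀ / γ)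
    rw [hw] at h ⊢
    refine h.congr_deriv ?_; symm
    field_simp
    ring
  have hterm : ∀ k, k ≤ ξ → HasDerivAt
      (fun s => Afun (lam s) ((x : ℤ) - k) * Bfun ξ (w s) k)
      ((Afun (lam t) ((x : ℤ) - k - 1) - Afun (lam t) ((x : ℤ) - k)) * (k₀ * w t)
          * Bfun ξ (w t) k
        + Afun (lam t) ((x : ℤ) - k)
          * (γ * (((k : ℝ) + 1) * Bfun ξ (w t) (k + 1) - (k : ℝ) * Bfun ξ (w t) k))) t := by
    intro k hkξ
    have hA' : HasDerivAt (fun s => Afun (lam s) ((x : ℤ) - k))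
        ((Afun (lam t) ((x : ℤ) - k - 1) - Afun (lam t) ((x : ℤ) - k)) * (k₀ * w t)) t :=
      (hasDerivAt_Afun (lam t) ((x : ℤ) - k)).comp t hlam'
    have hBt : HasDerivAt (fun s => Bfun ξ (w s) k)
        (γ * (((k : ℝ) + 1) * Bfun ξ (w t) (k + 1) - (k : ℝ) * Bfun ξ (w t) k)) t := by
      rw [hw]; exact hasDerivAt_Bfun ξ γ t₀ t k hkξ
    exact hA'.mul hBt
  have hsum : HasDerivAt
      (fun s => ∑ k ∈ Finset.range (ξ + 1), Afun (lam s) ((x : ℤ) - k) * Bfun ξ (w s) k)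
      (∑ k ∈ Finset.range (ξ + 1),
        ((Afun (lam t) ((x : ℤ) - k - 1) - Afun (lam t) ((x : ℤ) - k)) * (k₀ * w t)
          * Bfun ξ (w t) k
        + Afun (lam t) ((x : ℤ) - k)
          * (γ * (((k : ℝ) + 1) * Bfun ξ (w t) (k + 1) - (k : ℝ) * Bfun ξ (w t) k)))) t :=
    HasDerivAt.fun_sum fun k hk => hterm k (by simp only [Finset.mem_range] at hk; omega)
  have hfx : (fun t' => P x t')
      = fun s => ∑ k ∈ Finset.range (ξ + 1), Afun (lam s) ((x : ℤ) - k) * Bfun ξ (w s) k :=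
    funext fun s => P_eq x s
  rw [hfx, hsum.deriv]
  have hif : (if x = 0 then 0 else P (x - 1) t)
      = ∑ k ∈ Finset.range (ξ + 1), Afun (lam t) ((x : ℤ) - k - 1) * Bfun ξ (w t) k := by
    split
    · next h =>
      subst h
      refine (Finset.sum_eq_zero fun k hk => ?_).symm
      rw [Afun_neg (by omega), zero_mul]
    · next h =>
      rw [P_eq]
      refine Finset.sum_congr rfl fun k hk => ?_
      have harg : ((x - 1 : ℕ) : ℤ) - (k : ℤ) = (x : ℤ) - k - 1 := by omega
      rw [harg]
  have hx1 : ∀ k : ℕ, ((x + 1 : ℕ) : ℤ) - (k : ℤ) = (x : ℤ) - k + 1 := fun k => by push_cast; ring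
  rw [hif, P_eq x t, P_eq (x + 1) t]
  simp only [hx1]
  set l := lam t with hl
  set v := w t with hvv
  have hBtop : Bfun ξ v (ξ + 1) = 0 := by
    simp [Bfun, Nat.choose_eq_zero_of_lt (Nat.lt_succ_self ξ)]
  have hshift : ∑ k ∈ Finset.range (ξ + 1),
        Afun l ((x : ℤ) - k) * (((k : ℝ) + 1) * Bfun ξ v (k + 1))
      = ∑ k ∈ Finset.range (ξ + 1), Afun l ((x : ℤ) - k + 1) * ((k : ℝ) * Bfun ξ v k) := by
    set f : ℕ → ℝ := fun j => Afun l ((x : ℤ) - j + 1) * ((j : ℝ) * Bfun ξ v j) with hf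
    have h1 : ∑ k ∈ Finset.range (ξ + 1),
        Afun l ((x : ℤ) - k) * (((k : ℝ) + 1) * Bfun ξ v (k + 1))
        = ∑ k ∈ Finset.range (ξ + 1), f (k + 1) := by
      refine Finset.sum_congr rfl fun k hk => ?_
      simp only [hf]
      rw [show (x : ℤ) - (k + 1 : ℕ) + 1 = (x : ℤ) - k by push_cast; ring]
      push_cast
      ring
    have h2 := Finset.sum_range_succ' f (ξ + 1)
    have h3 := Finset.sum_range_succ f (ξ + 1)
    have hf0 : f 0 = 0 := by simp only [hf]; simp
    have hftop : f (ξ + 1) = 0 := by simp only [hf]; rw [hBtop]; ring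
    rw [h1]
    rw [hf0, add_zero] at h2
    rw [hftop, add_zero] at h3
    rw [← h2, h3]
  have hgl : γ * l = k₀ * (1 - v) := by
    rw [hl, hvv, hlam, hw]
    field_simp
  have key : ∀ k ∈ Finset.range (ξ + 1),
      (Afun l ((x : ℤ) - k - 1) - Afun l ((x : ℤ) - k)) * (k₀ * v) * Bfun ξ v k
        + Afun l ((x : ℤ) - k)
          * (γ * (((k : ℝ) + 1) * Bfun ξ v (k + 1) - (k : ℝ) * Bfun ξ v k))
      = (k₀ * (Afun l ((x : ℤ) - k - 1) * Bfun ξ v k)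
          - k₀ * (Afun l ((x : ℤ) - k) * Bfun ξ v k)
          + (γ * ((x : ℝ) + 1)) * (Afun l ((x : ℤ) - k + 1) * Bfun ξ v k)
          - (γ * (x : ℝ)) * (Afun l ((x : ℤ) - k) * Bfun ξ v k))
        + (γ * (Afun l ((x : ℤ) - k) * (((k : ℝ) + 1) * Bfun ξ v (k + 1)))
            - γ * (Afun l ((x : ℤ) - k + 1) * ((k : ℝ) * Bfun ξ v k))) := by
    intro k hk
    have h1 : ((x : ℝ) - (k : ℝ) + 1) * Afun l ((x : ℤ) - k + 1) = l * Afun l ((x : ℤ) - k) := by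
      have h := Afun_recur l ((x : ℤ) - k)
      push_cast at h
      exact h
    have h2 : ((x : ℝ) - (k : ℝ)) * Afun l ((x : ℤ) - k) = l * Afun l ((x : ℤ) - k - 1) := by
      have h := Afun_recur l ((x : ℤ) - k - 1)
      rw [show (x : ℤ) - k - 1 + 1 = (x : ℤ) - k by ring] at h
      push_cast at h
      linear_combination h
    linear_combination
      (Bfun ξ v k * (Afun l ((x : ℤ) - k - 1) - Afun l ((x : ℤ) - k))) * hgl
      + (-(γ * Bfun ξ v k)) * h1 + (γ * Bfun ξ v k) * h2
  rw [Finset.sum_congr rfl key, Finset.sum_add_distrib]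
  have hE : ∑ k ∈ Finset.range (ξ + 1),
      (γ * (Afun l ((x : ℤ) - k) * (((k : ℝ) + 1) * Bfun ξ v (k + 1)))
        - γ * (Afun l ((x : ℤ) - k + 1) * ((k : ℝ) * Bfun ξ v k))) = 0 := by
    rw [Finset.sum_sub_distrib, ← Finset.mul_sum, ← Finset.mul_sum, hshift, sub_self]
  rw [hE, add_zero]
  have hR : ∑ k ∈ Finset.range (ξ + 1),
      (k₀ * (Afun l ((x : ℤ) - k - 1) * Bfun ξ v k)
        - k₀ * (Afun l ((x : ℤ) - k) * Bfun ξ v k)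
        + (γ * ((x : ℝ) + 1)) * (Afun l ((x : ℤ) - k + 1) * Bfun ξ v k)
        - (γ * (x : ℝ)) * (Afun l ((x : ℤ) - k) * Bfun ξ v k))
      = k₀ * (∑ k ∈ Finset.range (ξ + 1), Afun l ((x : ℤ) - k - 1) * Bfun ξ v k)
        - k₀ * (∑ k ∈ Finset.range (ξ + 1), Afun l ((x : ℤ) - k) * Bfun ξ v k)
        + (γ * ((x : ℝ) + 1)) * (∑ k ∈ Finset.range (ξ + 1), Afun l ((x : ℤ) - k + 1) * Bfun ξ v k)
        - (γ * (x : ℝ)) * (∑ k ∈ Finset.range (ξ + 1), Afun l ((x : ℤ) - k) * Bfun ξ v k) := by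
    simp only [Finset.sum_sub_distrib, Finset.sum_add_distrib, ← Finset.mul_sum]
  rw [hR]
  ring
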